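/- Let f : ℝ → ℝ be continuous and nondecreasing, and let I be its set of points of increase. Then no point x ∈ I is simultaneously left-isolated and right-isolated in I; in particular, I has no isolated points. -/
import Mathlib


/-- A point of increase of `f : ℝ → ℝ` is `x` such that
`f z < f y` whenever `z < x` and `y > x`. -/
def PtsOfIncrease (f : ℝ → ℝ) : Set ℝ :=
  {x : ℝ | ∀ z < x, ∀ y, x < y → f z < f y}

/-- If a continuous monotone `f` has no point of increase in `Ioo a b`,
then `f` is constant on `Ioo a b`. -/
lemma const_of_no_incr (f : ℝ → ℝ) (hf : Monotone f) (hcont : Continuous f)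
    {a b : ℝ} (h : ∀ t ∈ Set.Ioo a b, t ∉ PtsOfIncrease f) :
    ∀ s ∈ Set.Ioo a b, ∀ t ∈ Set.Ioo a b, s ≤ t → f s = f t := by
  intro s hs t ht hst
  by_contra hne
  have hlt : f s < f t := lt_of_le_of_ne (hf hst) hne
  set S : Set ℝ := Set.Icc s t ∩ f ⁻¹' {f s} with hS
  have hSne : S.Nonempty := ⟨s, ⟨le_refl s, hst⟩, rfl⟩
  have hSbdd : BddAbove S := ⟨t, fun u hu => hu.1.2⟩
  have hSclosed : IsClosed S :=
    isClosed_Icc.inter (isClosed_singleton.preimage hcont)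
  set c := sSup S with hc
  have hcS : c ∈ S := hSclosed.csSup_mem hSne hSbdd
  have hsc : s ≤ c := le_csSup hSbdd ⟨⟨le_refl s, hst⟩, rfl⟩
  have hct : c ≤ t := csSup_le hSne fun u hu => hu.1.2
  have hfc : f c = f s := hcS.2
  have hcI : c ∈ Set.Ioo a b := ⟨lt_of_lt_of_le hs.1 hsc, lt_of_le_of_lt hct ht.2⟩
  apply h c hcI
  intro z hz y hy
  have h1 : f z ≤ f s := hfc ▸ hf hz.le
  have h2 : f s < f y := by
    rcases le_or_gt y t with hyt | hyt
    · have hy1 : f s ≤ f y := hf (hsc.trans hy.le)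
      rcases eq_or_lt_of_le hy1 with heq | hlt'
      · exact absurd (le_csSup hSbdd ⟨⟨hsc.trans hy.le, hyt⟩, heq.symm⟩) (not_le.mpr hy)
      · exact hlt'
    · exact hlt.trans_le (hf hyt.le)
  exact h1.trans_lt h2

/-- If a continuous monotone `f` is constant on `Ioo x b`, it equals `f x` there. -/
lemma right_const (f : ℝ → ℝ) (hf : Monotone f) (hcont : Continuous f)
    {x b : ℝ}
    (hconst : ∀ s ∈ Set.Ioo x b, ∀ t ∈ Set.Ioo x b, s ≤ t → f s = f t) :
    ∀ t ∈ Set.Ioo x b, f t = f x := by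
  intro t ht
  rcases eq_or_lt_of_le (hf ht.1.le) with heq | hlt
  · exact heq.symm
  · exfalso
    obtain ⟨δ, hδ, hδ'⟩ := Metric.continuousAt_iff.mp
      (hcont.continuousAt : ContinuousAt f x) (f t - f x) (by linarith)
    have hm1 : min δ (t - x) ≤ δ := min_le_left _ _
    have hm2 : min δ (t - x) ≤ t - x := min_le_right _ _
    have hm0 : 0 < min δ (t - x) := lt_min hδ (by linarith [ht.1])
    have hxs : x < x + min δ (t - x) / 2 := by linarith
    have hst : x + min δ (t - x) / 2 < t := by linarith
    have hsI : x + min δ (t - x) / 2 ∈ Set.Ioo x b := ⟨hxs, hst.trans ht.2⟩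
    have hfs : f (x + min δ (t - x) / 2) = f t := hconst _ hsI t ht hst.le
    have hdist : dist (x + min δ (t - x) / 2) x < δ := by
      rw [Real.dist_eq, abs_of_pos (by linarith : (0:ℝ) < x + min δ (t - x) / 2 - x)]
      linarith
    have := hδ' hdist
    rw [Real.dist_eq, hfs] at this
    exact absurd (lt_of_le_of_lt (le_abs_self _) this) (lt_irrefl _)

/-- If a continuous monotone `f` is constant on `Ioo a x`, it equals `f x` there. -/
lemma left_const (f : ℝ → ℝ) (hf : Monotone f) (hcont : Continuous f)
    {a x : ℝ}
    (hconst : ∀ s ∈ Set.Ioo a x, ∀ t ∈ Set.Ioo a x, s ≤ t → f s = f t) :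
    ∀ t ∈ Set.Ioo a x, f t = f x := by
  intro t ht
  rcases eq_or_lt_of_le (hf ht.2.le) with heq | hlt
  · exact heq
  · exfalso
    obtain ⟨δ, hδ, hδ'⟩ := Metric.continuousAt_iff.mp
      (hcont.continuousAt : ContinuousAt f x) (f x - f t) (by linarith)
    have hm1 : min δ (x - t) ≤ δ := min_le_left _ _
    have hm2 : min δ (x - t) ≤ x - t := min_le_right _ _
    have hm0 : 0 < min δ (x - t) := lt_min hδ (by linarith [ht.2])
    have hsx : x - min δ (x - t) / 2 < x := by linarith
    have hts : t < x - min δ (x - t) / 2 := by linarith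
    have hsI : x - min δ (x - t) / 2 ∈ Set.Ioo a x := ⟨ht.1.trans hts, hsx⟩
    have hfs : f t = f (x - min δ (x - t) / 2) := hconst t ht _ hsI hts.le
    have hdist : dist (x - min δ (x - t) / 2) x < δ := by
      rw [Real.dist_eq, abs_of_neg (by linarith : x - min δ (x - t) / 2 - x < 0)]
      linarith
    have := hδ' hdist
    rw [Real.dist_eq, ← hfs] at this
    have h2 : f x - f t ≤ |f t - f x| := by rw [abs_sub_comm]; exact le_abs_self _
    linarith

/-- For a continuous nondecreasing `f`, no point of increase is simultaneously
left-isolated and right-isolated in the set of points of increase. -/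
theorem ptsOfIncrease_no_isolated (f : ℝ → ℝ) (hf : Monotone f) (hcont : Continuous f)
    (x : ℝ) (hx : x ∈ PtsOfIncrease f) :
    ¬((∃ ε > 0, ∀ t ∈ Set.Ioo (x - ε) x, t ∉ PtsOfIncrease f) ∧
      (∃ ε > 0, ∀ t ∈ Set.Ioo x (x + ε), t ∉ PtsOfIncrease f)) := by
  rintro ⟨⟨ε₁, hε₁, hleft⟩, ⟨ε₂, hε₂, hright⟩⟩
  have hzI : x - ε₁ / 2 ∈ Set.Ioo (x - ε₁) x := ⟨by linarith, by linarith⟩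
  have hyI : x + ε₂ / 2 ∈ Set.Ioo x (x + ε₂) := ⟨by linarith, by linarith⟩
  have hfy : f (x + ε₂ / 2) = f x :=
    right_const f hf hcont (const_of_no_incr f hf hcont hright) _ hyI
  have hfz : f (x - ε₁ / 2) = f x :=
    left_const f hf hcont (const_of_no_incr f hf hcont hleft) _ hzI
  have := hx (x - ε₁ / 2) (by linarith) (x + ε₂ / 2) (by linarith)
  rw [hfz, hfy] at this
  exact lt_irrefl _ this
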